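/- arXiv:2004.03858 — 2 statements merged into one kernel-verified Lean document; each statement's English description precedes it below -/
import Mathlib

section
/- Let 0 < r < 1/(4e), p ≥ 2, and set δ_p = ⌊(p−2)/(2|log r|)⌋ and c_ℓ^{(p)} = (ℓ^{p-1}/(2π(p-2)!))^{1/2}. Then for every m ∈ ℕ there exists C > 0 such that for all p ≥ 2, all ℓ ∈ {1,…,δ_p}, and all z with |z| ≤ p^{-1/(2α)} (where α > 0 is chosen with αp ≤ δ_p and δ_p + 1 ≤ p/2 for p large): |log(|z|²)|^p Σ_{j=δ_p+1}^∞ (c_j^{(p)})² |z|^{2j} ≤ C p^{-m} B_p^{D*}(z). -/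
/-- `c_ℓ^{(p)} = (ℓ^{p-1}/(2π(p-2)!))^{1/2}`. -/
noncomputable def cc (p ℓ : ℕ) : ℝ :=
  Real.sqrt ((ℓ : ℝ) ^ (p - 1) / (2 * Real.pi * (Nat.factorial (p - 2))))

/-- `B_p^{D*}(z) = |log(|z|²)|^p Σ_{j≥1} (c_j^{(p)})² |z|^{2j}`. -/
noncomputable def BpD (p : ℕ) (z : ℂ) : ℝ :=
  |Real.log ((‖z‖) ^ 2)| ^ p *
    ∑' j : ℕ, (cc p (j + 1)) ^ 2 * (‖z‖) ^ (2 * (j + 1))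

/-- `δ_p = ⌊(p−2)/(2|log r|)⌋`. -/
noncomputable def δp (r : ℝ) (p : ℕ) : ℕ :=
  Int.toNat ⌊((p : ℝ) - 2) / (2 * |Real.log r|)⌋

/-- Key scalar bound: `(δ_p+1)^{p-1} p^{-δ_p/α} ≤ C p^{-m}` for all `p ≥ 2`. -/
lemma keybound (α : ℝ) (hα : 0 < α) (δ : ℕ → ℕ)
    (hαδ : ∃ p0 : ℕ, ∀ p : ℕ, p0 ≤ p →
      α * p ≤ (δ p : ℝ) ∧ ((δ p : ℝ) + 1) ≤ (p : ℝ) / 2) (m : ℕ) :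
    ∃ C > 0, ∀ p : ℕ, 2 ≤ p →
      ((δ p : ℝ) + 1) ^ (p - 1) * (p : ℝ) ^ (-((δ p : ℝ) / α)) ≤ C * (p : ℝ) ^ (-(m : ℝ)) := by
  obtain ⟨p0, hp0⟩ := hαδ
  set h : ℕ → ℝ := fun p =>
    ((δ p : ℝ) + 1) ^ (p - 1) * (p : ℝ) ^ (-((δ p : ℝ) / α)) * (p : ℝ) ^ ((m : ℝ)) with hh
  -- the auxiliary sequence `v p = p^m (1/2)^{p-1}` tends to 0
  have hu : Filter.Tendsto (fun p : ℕ => 2 * ((p : ℝ) ^ m * (1 / 2 : ℝ) ^ p))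
      Filter.atTop (nhds 0) := by
    have := (summable_pow_mul_geometric_of_norm_lt_one (R := ℝ) m
      (r := (1 / 2 : ℝ)) (by norm_num)).tendsto_atTop_zero
    simpa using (this.const_mul 2)
  have hev : ∀ᶠ p : ℕ in Filter.atTop, h p ≤ 1 := by
    have h1 : ∀ᶠ p : ℕ in Filter.atTop, 2 * ((p : ℝ) ^ m * (1 / 2 : ℝ) ^ p) < 1 :=
      hu.eventually_lt_const one_pos
    filter_upwards [h1, Filter.eventually_ge_atTop p0, Filter.eventually_ge_atTop 2]
      with p hv hp0' hp2
    obtain ⟨hd1, hd2⟩ := hp0 p hp0'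
    have hp1 : (1 : ℝ) ≤ (p : ℝ) := by exact_mod_cast Nat.one_le_of_lt hp2
    have hp2' : (2 : ℝ) ≤ (p : ℝ) := by exact_mod_cast hp2
    have hppos : (0 : ℝ) < (p : ℝ) := by linarith
    have hA : ((δ p : ℝ) + 1) ^ (p - 1) ≤ ((p : ℝ) / 2) ^ (p - 1) :=
      pow_le_pow_left₀ (by positivity) hd2 _
    have hB : (p : ℝ) ^ (-((δ p : ℝ) / α)) ≤ (p : ℝ) ^ (-(p : ℝ)) := by
      apply Real.rpow_le_rpow_of_exponent_le hp1
      have : (p : ℝ) ≤ (δ p : ℝ) / α := (le_div_iff₀ hα).2 (by linarith [hd1])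
      linarith
    have hC : ((p : ℝ) / 2) ^ (p - 1) * (p : ℝ) ^ (-(p : ℝ)) ≤ (1 / 2 : ℝ) ^ (p - 1) := by
      have e1 : ((p : ℝ) / 2) ^ (p - 1) = (p : ℝ) ^ (p - 1) * (1 / 2 : ℝ) ^ (p - 1) := by
        rw [← mul_pow]; ring_nf
      have e2 : (p : ℝ) ^ (p - 1) * (p : ℝ) ^ (-(p : ℝ)) ≤ 1 := by
        rw [← Real.rpow_natCast (p : ℝ) (p - 1), ← Real.rpow_add hppos]
        have : ((p - 1 : ℕ) : ℝ) + (-(p : ℝ)) = -1 := by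
          have : ((p - 1 : ℕ) : ℝ) = (p : ℝ) - 1 := by
            push_cast [Nat.cast_sub (by omega : 1 ≤ p)]; ring
          rw [this]; ring
        rw [this]
        rw [Real.rpow_neg_one]
        rw [inv_le_one_iff₀]; right; exact hp1
      calc ((p : ℝ) / 2) ^ (p - 1) * (p : ℝ) ^ (-(p : ℝ))
          = ((p : ℝ) ^ (p - 1) * (p : ℝ) ^ (-(p : ℝ))) * (1 / 2 : ℝ) ^ (p - 1) := by
            rw [e1]; ring
        _ ≤ 1 * (1 / 2 : ℝ) ^ (p - 1) := by
            apply mul_le_mul_of_nonneg_right e2 (by positivity)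
        _ = (1 / 2 : ℝ) ^ (p - 1) := one_mul _
    have hD : (1 / 2 : ℝ) ^ (p - 1) = 2 * (1 / 2 : ℝ) ^ p := by
      have e : (1 / 2 : ℝ) ^ p = (1 / 2 : ℝ) ^ (p - 1) * (1 / 2) := by
        rw [← pow_succ]; congr 1; omega
      rw [e]; ring
    have hm : (p : ℝ) ^ ((m : ℝ)) = (p : ℝ) ^ m := Real.rpow_natCast _ _
    have hBpos : (0 : ℝ) ≤ (p : ℝ) ^ (-((δ p : ℝ) / α)) := Real.rpow_nonneg (by positivity) _
    have hstep : h p ≤ (1 / 2 : ℝ) ^ (p - 1) * (p : ℝ) ^ m := by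
      rw [hh]
      simp only
      rw [hm]
      have : ((δ p : ℝ) + 1) ^ (p - 1) * (p : ℝ) ^ (-((δ p : ℝ) / α))
          ≤ (1 / 2 : ℝ) ^ (p - 1) := by
        calc ((δ p : ℝ) + 1) ^ (p - 1) * (p : ℝ) ^ (-((δ p : ℝ) / α))
            ≤ ((p : ℝ) / 2) ^ (p - 1) * (p : ℝ) ^ (-(p : ℝ)) := by
              apply mul_le_mul hA hB hBpos (by positivity)
          _ ≤ (1 / 2 : ℝ) ^ (p - 1) := hC
      exact mul_le_mul_of_nonneg_right this (by positivity)
    calc h p ≤ (1 / 2 : ℝ) ^ (p - 1) * (p : ℝ) ^ m := hstep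
      _ = 2 * ((p : ℝ) ^ m * (1 / 2 : ℝ) ^ p) := by rw [hD]; ring
      _ ≤ 1 := le_of_lt hv
  obtain ⟨N, hN⟩ := Filter.eventually_atTop.1 hev
  set C : ℝ := 1 + ∑ p ∈ Finset.range N, |h p| with hCdef
  have hCpos : 0 < C := by
    have : (0 : ℝ) ≤ ∑ p ∈ Finset.range N, |h p| :=
      Finset.sum_nonneg fun i _ => abs_nonneg _
    linarith
  refine ⟨C, hCpos, fun p hp => ?_⟩
  have hppos : (0 : ℝ) < (p : ℝ) := by exact_mod_cast Nat.lt_of_lt_of_le Nat.zero_lt_two hp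
  have hhC : h p ≤ C := by
    rcases le_or_gt N p with hNp | hNp
    · have := hN p hNp
      have : h p ≤ 1 := this
      have hsum : (0 : ℝ) ≤ ∑ q ∈ Finset.range N, |h q| :=
        Finset.sum_nonneg fun i _ => abs_nonneg _
      linarith
    · have hmem : p ∈ Finset.range N := Finset.mem_range.2 hNp
      have h1 : |h p| ≤ ∑ q ∈ Finset.range N, |h q| :=
        Finset.single_le_sum (fun i _ => abs_nonneg (h i)) hmem
      calc h p ≤ |h p| := le_abs_self _
        _ ≤ ∑ q ∈ Finset.range N, |h q| := h1
        _ ≤ C := by rw [hCdef]; linarith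
  have hpow : (p : ℝ) ^ ((m : ℝ)) * (p : ℝ) ^ (-(m : ℝ)) = 1 := by
    rw [← Real.rpow_add hppos]; simp
  have : ((δ p : ℝ) + 1) ^ (p - 1) * (p : ℝ) ^ (-((δ p : ℝ) / α))
      = h p * (p : ℝ) ^ (-(m : ℝ)) := by
    rw [hh]; simp only; rw [mul_assoc, hpow, mul_one]
  rw [this]
  exact mul_le_mul_of_nonneg_right hhC (Real.rpow_nonneg (le_of_lt hppos) _)

set_option maxHeartbeats 1600000 in
/-- On the shrinking discs `|z| ≤ p^{-1/(2α)}`, the tail of the Bergman series beyond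
index `δ_p` is `O(p^{-∞})` relative to `B_p^{D*}`. -/
theorem stmt8 (r : ℝ) (hr0 : 0 < r) (hr1 : r < 1 / (4 * Real.exp 1))
    (α : ℝ) (hα : 0 < α)
    (hαδ : ∃ p0 : ℕ, ∀ p : ℕ, p0 ≤ p →
      α * p ≤ (δp r p : ℝ) ∧ ((δp r p : ℝ) + 1) ≤ (p : ℝ) / 2) :
    ∀ m : ℕ, ∃ C > 0, ∀ p : ℕ, 2 ≤ p → ∀ z : ℂ,
      0 < ‖z‖ → ‖z‖ ≤ (p : ℝ) ^ (-(1 / (2 * α))) →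
      |Real.log ((‖z‖) ^ 2)| ^ p *
          ∑' j : ℕ, (cc p (j + δp r p + 1)) ^ 2 * (‖z‖) ^ (2 * (j + δp r p + 1))
        ≤ C * (p : ℝ) ^ (-(m : ℝ)) * BpD p z := by
  intro m
  obtain ⟨C, hCpos, hK⟩ := keybound α hα (δp r) hαδ m
  refine ⟨C, hCpos, fun p hp z hz0 hz1 => ?_⟩
  set x := ‖z‖ with hx
  set δ := δp r p with hδ
  have hx0 : 0 ≤ x := norm_nonneg z
  have hppos : (0 : ℝ) < (p : ℝ) := by exact_mod_cast Nat.lt_of_lt_of_le Nat.zero_lt_two hp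
  have hp1 : (1 : ℝ) < (p : ℝ) := by exact_mod_cast Nat.lt_of_lt_of_le Nat.one_lt_two hp
  have hx1 : x < 1 := by
    apply lt_of_le_of_lt hz1
    apply Real.rpow_lt_one_of_one_lt_of_neg hp1
    have : 0 < 1 / (2 * α) := by positivity
    linarith
  set D : ℝ := 2 * Real.pi * (Nat.factorial (p - 2)) with hD
  have hDpos : 0 < D := by
    have := Real.pi_pos
    have := Nat.factorial_pos (p - 2)
    positivity
  have hcc : ∀ ℓ : ℕ, (cc p ℓ) ^ 2 = (ℓ : ℝ) ^ (p - 1) / D := by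
    intro ℓ
    rw [cc, Real.sq_sqrt]
    positivity
  -- summability of the full series
  have hx2 : ‖x ^ 2‖ < 1 := by
    rw [Real.norm_eq_abs, abs_of_nonneg (by positivity)]
    nlinarith
  have hbase : Summable (fun n : ℕ => (n : ℝ) ^ (p - 1) * (x ^ 2) ^ n) :=
    summable_pow_mul_geometric_of_norm_lt_one (p - 1) hx2
  have hshift : Summable (fun j : ℕ => ((j + 1 : ℕ) : ℝ) ^ (p - 1) * (x ^ 2) ^ (j + 1)) :=
    (summable_nat_add_iff 1).2 hbase
  have hS : Summable (fun j : ℕ => (cc p (j + 1)) ^ 2 * x ^ (2 * (j + 1))) := by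
    apply Summable.congr (hshift.div_const D)
    intro j
    rw [hcc, pow_mul]
    ring
  have hSnn : ∀ j : ℕ, 0 ≤ (cc p (j + 1)) ^ 2 * x ^ (2 * (j + 1)) := by
    intro j; positivity
  set K : ℝ := ((δ : ℝ) + 1) ^ (p - 1) * x ^ (2 * δ) with hKdef
  have hKnn : 0 ≤ K := by positivity
  -- term-wise bound
  have hterm : ∀ j : ℕ, (cc p (j + δ + 1)) ^ 2 * x ^ (2 * (j + δ + 1))
      ≤ K * ((cc p (j + 1)) ^ 2 * x ^ (2 * (j + 1))) := by
    intro j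
    rw [hcc, hcc]
    have h1 : ((j + δ + 1 : ℕ) : ℝ) ^ (p - 1)
        ≤ ((δ : ℝ) + 1) ^ (p - 1) * ((j + 1 : ℕ) : ℝ) ^ (p - 1) := by
      rw [← mul_pow]
      apply pow_le_pow_left₀ (by positivity)
      push_cast
      nlinarith [Nat.cast_nonneg (α := ℝ) j, Nat.cast_nonneg (α := ℝ) δ]
    have h2 : x ^ (2 * (j + δ + 1)) = x ^ (2 * δ) * x ^ (2 * (j + 1)) := by
      rw [← pow_add]; congr 1; ring
    calc ((j + δ + 1 : ℕ) : ℝ) ^ (p - 1) / D * x ^ (2 * (j + δ + 1))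
        = ((j + δ + 1 : ℕ) : ℝ) ^ (p - 1) * (x ^ (2 * δ) * x ^ (2 * (j + 1))) / D := by
          rw [h2]; ring
      _ ≤ (((δ : ℝ) + 1) ^ (p - 1) * ((j + 1 : ℕ) : ℝ) ^ (p - 1))
            * (x ^ (2 * δ) * x ^ (2 * (j + 1))) / D := by
          gcongr
      _ = K * (((j + 1 : ℕ) : ℝ) ^ (p - 1) / D * x ^ (2 * (j + 1))) := by
          rw [hKdef]; ring
  have hT : Summable (fun j : ℕ => (cc p (j + δ + 1)) ^ 2 * x ^ (2 * (j + δ + 1))) := by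
    apply Summable.of_nonneg_of_le (fun j => by positivity) hterm
    exact hS.mul_left K
  have htsum : (∑' j : ℕ, (cc p (j + δ + 1)) ^ 2 * x ^ (2 * (j + δ + 1)))
      ≤ K * ∑' j : ℕ, (cc p (j + 1)) ^ 2 * x ^ (2 * (j + 1)) := by
    rw [← tsum_mul_left]
    exact Summable.tsum_le_tsum hterm hT (hS.mul_left K)
  -- K ≤ C p^{-m}
  have hKle : K ≤ C * (p : ℝ) ^ (-(m : ℝ)) := by
    have hxδ : x ^ (2 * δ) ≤ (p : ℝ) ^ (-((δ : ℝ) / α)) := by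
      calc x ^ (2 * δ) ≤ ((p : ℝ) ^ (-(1 / (2 * α)))) ^ (2 * δ) :=
            pow_le_pow_left₀ hx0 hz1 _
        _ = (p : ℝ) ^ (-((δ : ℝ) / α)) := by
            rw [← Real.rpow_natCast ((p : ℝ) ^ (-(1 / (2 * α)))) (2 * δ),
              ← Real.rpow_mul (le_of_lt hppos)]
            congr 1
            push_cast
            field_simp
    calc K ≤ ((δ : ℝ) + 1) ^ (p - 1) * (p : ℝ) ^ (-((δ : ℝ) / α)) := by
          rw [hKdef]
          exact mul_le_mul_of_nonneg_left hxδ (by positivity)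
      _ ≤ C * (p : ℝ) ^ (-(m : ℝ)) := hK p hp
  -- conclude
  have hSsum_nn : 0 ≤ ∑' j : ℕ, (cc p (j + 1)) ^ 2 * x ^ (2 * (j + 1)) :=
    tsum_nonneg hSnn
  have hfinal : (∑' j : ℕ, (cc p (j + δ + 1)) ^ 2 * x ^ (2 * (j + δ + 1)))
      ≤ C * (p : ℝ) ^ (-(m : ℝ)) * ∑' j : ℕ, (cc p (j + 1)) ^ 2 * x ^ (2 * (j + 1)) :=
    le_trans htsum (mul_le_mul_of_nonneg_right hKle hSsum_nn)
  rw [BpD]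
  have hL : 0 ≤ |Real.log (x ^ 2)| ^ p := by positivity
  calc |Real.log (x ^ 2)| ^ p *
        ∑' j : ℕ, (cc p (j + δ + 1)) ^ 2 * x ^ (2 * (j + δ + 1))
      ≤ |Real.log (x ^ 2)| ^ p *
        (C * (p : ℝ) ^ (-(m : ℝ)) * ∑' j : ℕ, (cc p (j + 1)) ^ 2 * x ^ (2 * (j + 1))) :=
        mul_le_mul_of_nonneg_left hfinal hL
    _ = C * (p : ℝ) ^ (-(m : ℝ)) *
        (|Real.log (x ^ 2)| ^ p * ∑' j : ℕ, (cc p (j + 1)) ^ 2 * x ^ (2 * (j + 1))) := by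
        ring
end

section
/- Let H be a complex inner product space, V ⊂ H a closed subspace, and (φ_ℓ)_{1≤ℓ≤δ} a family in V with |⟨φ_j, φ_ℓ⟩ − δ_{jℓ}| ≤ ε for all j, ℓ, where 0 < ε < 1/(4δ). Let (σ_ℓ) be the Gram–Schmidt orthonormalization of (φ_ℓ). Then there is a constant C depending only polynomially on δ such that ‖σ_ℓ − φ_ℓ‖ ≤ C δ ε for all ℓ ∈ {1,…,δ}. -/
open Finset

noncomputable def Kc : ℕ → ℝ := fun n => (3 * 5 ^ n - 1) / 2

lemma Kc_ge_one (n : ℕ) : (1:ℝ) ≤ Kc n := by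
  have h : (1:ℝ) ≤ 5 ^ n := one_le_pow₀ (by norm_num : (1:ℝ) ≤ 5)
  simp only [Kc]
  nlinarith

lemma Kc_sum (n : ℕ) : 1 + 2 * ∑ i ∈ range n, (2 * Kc i + 1) = Kc n := by
  induction n with
  | zero => norm_num [Kc]
  | succ n ih =>
    rw [Finset.sum_range_succ]
    simp only [Kc, pow_succ] at ih ⊢
    nlinarith

lemma smul_sub_self_norm {E : Type*} [NormedAddCommGroup E] [NormedSpace ℂ E]
    (c : ℂ) (x : E) : ‖c • x - x‖ = ‖c - 1‖ * ‖x‖ := by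
  rw [show c • x - x = (c - 1) • x by rw [sub_smul, one_smul], norm_smul]

lemma key {H : Type} [NormedAddCommGroup H] [InnerProductSpace ℂ H]
    (δ : ℕ) (φ : ℕ → H) (ε : ℝ) (hε : 0 < ε) (hε1 : ε ≤ 1)
    (hG : ∀ j ℓ, j < δ → ℓ < δ →
      ‖(inner ℂ (φ j) (φ ℓ) : ℂ) - (if j = ℓ then 1 else 0)‖ ≤ ε) :
    ∀ n, n < δ → ‖InnerProductSpace.gramSchmidtNormed ℂ φ n - φ n‖ ≤ Kc n * ε := by
  intro n
  induction n using Nat.strong_induction_on with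
  | _ n ih =>
    intro hn
    set ψ : ℕ → H := InnerProductSpace.gramSchmidt ℂ φ with hψdef
    -- norm of φ n close to 1
    have hnn : ‖((inner ℂ (φ n) (φ n) : ℂ)) - 1‖ ≤ ε := by
      have := hG n n hn hn; simpa using this
    have hsq : |‖φ n‖ ^ 2 - 1| ≤ ε := by
      rw [inner_self_eq_norm_sq_to_K (𝕜 := ℂ), ← RCLike.ofReal_one (K := ℂ),
        ← RCLike.ofReal_pow, ← RCLike.ofReal_sub, RCLike.norm_ofReal] at hnn
      exact hnn
    have hpos : (0:ℝ) ≤ ‖φ n‖ := norm_nonneg _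
    have hnorm1 : |‖φ n‖ - 1| ≤ ε := by
      rw [abs_le] at hsq ⊢
      constructor <;> nlinarith [hsq.1, hsq.2]
    have hφn2 : ‖φ n‖ ≤ 2 := by
      have := (abs_le.mp hnorm1).2; linarith
    -- bound on each projection
    have hproj : ∀ i, i < n →
        ‖(((ℂ ∙ ψ i).starProjection (φ n)) : H)‖ ≤ (2 * Kc i + 1) * ε := by
      intro i hi
      have hiδ : i < δ := hi.trans hn
      have hKi := Kc_ge_one i
      by_cases hz : ψ i = 0
      · rw [Submodule.starProjection_singleton, hz]
        simp only [smul_zero, norm_zero]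
        positivity
      · have hni : ‖(((ℂ ∙ ψ i).starProjection (φ n)) : H)‖
            = ‖(inner ℂ (InnerProductSpace.gramSchmidtNormed ℂ φ i) (φ n) : ℂ)‖ := by
          have hψn : ‖ψ i‖ ≠ 0 := norm_ne_zero_iff.mpr hz
          rw [Submodule.starProjection_singleton, InnerProductSpace.gramSchmidtNormed, ← hψdef, inner_smul_left]
          rw [norm_smul, norm_div, RCLike.norm_ofReal, norm_mul, RCLike.norm_conj,
            norm_inv, RCLike.norm_ofReal]
          rw [abs_of_nonneg (sq_nonneg _), abs_norm, sq]
          field_simp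
        rw [hni]
        have hsplit : (inner ℂ (InnerProductSpace.gramSchmidtNormed ℂ φ i) (φ n) : ℂ)
            = inner ℂ (InnerProductSpace.gramSchmidtNormed ℂ φ i - φ i) (φ n) + inner ℂ (φ i) (φ n) := by
          rw [inner_sub_left]; ring
        have h1 : ‖(inner ℂ (InnerProductSpace.gramSchmidtNormed ℂ φ i - φ i) (φ n) : ℂ)‖ ≤ Kc i * ε * 2 := by
          calc ‖(inner ℂ (InnerProductSpace.gramSchmidtNormed ℂ φ i - φ i) (φ n) : ℂ)‖
              ≤ ‖InnerProductSpace.gramSchmidtNormed ℂ φ i - φ i‖ * ‖φ n‖ := norm_inner_le_norm _ _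
            _ ≤ (Kc i * ε) * 2 := by
                have := ih i hi hiδ
                have h0 : (0:ℝ) ≤ ‖InnerProductSpace.gramSchmidtNormed ℂ φ i - φ i‖ := norm_nonneg _
                nlinarith
        have h2 : ‖(inner ℂ (φ i) (φ n) : ℂ)‖ ≤ ε := by
          have := hG i n hiδ hn
          rw [if_neg (Nat.ne_of_lt hi)] at this
          simpa using this
        calc ‖(inner ℂ (InnerProductSpace.gramSchmidtNormed ℂ φ i) (φ n) : ℂ)‖
            ≤ ‖(inner ℂ (InnerProductSpace.gramSchmidtNormed ℂ φ i - φ i) (φ n) : ℂ)‖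
              + ‖(inner ℂ (φ i) (φ n) : ℂ)‖ := by rw [hsplit]; exact norm_add_le _ _
          _ ≤ (2 * Kc i + 1) * ε := by linarith
    -- bound ‖ψ n - φ n‖
    have hS : ‖ψ n - φ n‖ ≤ (∑ i ∈ range n, (2 * Kc i + 1)) * ε := by
      have hdef := InnerProductSpace.gramSchmidt_def ℂ φ n
      have : ψ n - φ n = -∑ i ∈ Finset.Iio n, (((ℂ ∙ ψ i).starProjection (φ n)) : H) := by
        rw [hψdef, hdef]; abel
      rw [this, norm_neg]
      calc ‖∑ i ∈ Finset.Iio n, (((ℂ ∙ ψ i).starProjection (φ n)) : H)‖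
          ≤ ∑ i ∈ Finset.Iio n, ‖(((ℂ ∙ ψ i).starProjection (φ n)) : H)‖ :=
            norm_sum_le _ _
        _ ≤ ∑ i ∈ Finset.Iio n, (2 * Kc i + 1) * ε := by
            refine Finset.sum_le_sum ?_
            intro i hi
            exact hproj i (Finset.mem_Iio.mp hi)
        _ = (∑ i ∈ range n, (2 * Kc i + 1)) * ε := by
            rw [Nat.Iio_eq_range, Finset.sum_mul]
    -- bound ‖σ n - ψ n‖
    have hTS : ‖InnerProductSpace.gramSchmidtNormed ℂ φ n - ψ n‖ ≤ |1 - ‖ψ n‖| := by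
      rw [InnerProductSpace.gramSchmidtNormed, ← hψdef, smul_sub_self_norm]
      by_cases hz : ψ n = 0
      · simp [hz]
      · have hψpos : 0 < ‖ψ n‖ := norm_pos_iff.mpr hz
        rw [← RCLike.ofReal_one (K := ℂ), ← RCLike.ofReal_inv, ← RCLike.ofReal_sub,
          RCLike.norm_ofReal]
        have h2 : (‖ψ n‖⁻¹ - 1) * ‖ψ n‖ = 1 - ‖ψ n‖ := by field_simp
        calc |‖ψ n‖⁻¹ - 1| * ‖ψ n‖ = |(‖ψ n‖⁻¹ - 1) * ‖ψ n‖| := by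
              rw [abs_mul, abs_of_pos hψpos]
          _ = |1 - ‖ψ n‖| := by rw [h2]
          _ ≤ |1 - ‖ψ n‖| := le_refl _
    -- combine
    have htri : |1 - ‖ψ n‖| ≤ |1 - ‖φ n‖| + ‖φ n - ψ n‖ := by
      have h := abs_norm_sub_norm_le (φ n) (ψ n)
      have : |1 - ‖ψ n‖| ≤ |1 - ‖φ n‖| + |‖φ n‖ - ‖ψ n‖| := by
        have := abs_sub_abs_le_abs_sub (1 - ‖ψ n‖) (1 - ‖φ n‖)
        calc |1 - ‖ψ n‖| = |(1 - ‖φ n‖) + (‖φ n‖ - ‖ψ n‖)| := by ring_nf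
          _ ≤ |1 - ‖φ n‖| + |‖φ n‖ - ‖ψ n‖| := abs_add_le _ _
      linarith
    have hfn : ‖φ n - ψ n‖ = ‖ψ n - φ n‖ := norm_sub_rev _ _
    have h1n : |1 - ‖φ n‖| ≤ ε := by rw [abs_sub_comm]; exact hnorm1
    have hfinal : ‖InnerProductSpace.gramSchmidtNormed ℂ φ n - φ n‖
        ≤ ‖InnerProductSpace.gramSchmidtNormed ℂ φ n - ψ n‖ + ‖ψ n - φ n‖ := by
      calc ‖InnerProductSpace.gramSchmidtNormed ℂ φ n - φ n‖
          = ‖(InnerProductSpace.gramSchmidtNormed ℂ φ n - ψ n) + (ψ n - φ n)‖ := by congr 1; abel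
        _ ≤ _ := norm_add_le _ _
    have hKsum := Kc_sum n
    have hSnn : (0:ℝ) ≤ ∑ i ∈ range n, (2 * Kc i + 1) := by
      refine Finset.sum_nonneg ?_
      intro i _
      have := Kc_ge_one i; linarith
    calc ‖InnerProductSpace.gramSchmidtNormed ℂ φ n - φ n‖
        ≤ ‖InnerProductSpace.gramSchmidtNormed ℂ φ n - ψ n‖ + ‖ψ n - φ n‖ := hfinal
      _ ≤ (|1 - ‖φ n‖| + ‖φ n - ψ n‖) + ‖ψ n - φ n‖ := by linarith [hTS, htri]
      _ ≤ (ε + (∑ i ∈ range n, (2 * Kc i + 1)) * ε) + (∑ i ∈ range n, (2 * Kc i + 1)) * ε := by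
          rw [hfn]; linarith
      _ = (1 + 2 * ∑ i ∈ range n, (2 * Kc i + 1)) * ε := by ring
      _ = Kc n * ε := by rw [hKsum]

/-- Quantitative stability of Gram–Schmidt orthonormalization: given an almost-orthonormal
family `(φ_ℓ)_{ℓ<δ}` in a closed subspace `V` of a complex inner product space `H`, with
`|⟨φ_j, φ_ℓ⟩ − δ_{jℓ}| ≤ ε` and `0 < ε < 1/(4δ)`, the Gram–Schmidt orthonormalization
`(σ_ℓ)` satisfies `‖σ_ℓ − φ_ℓ‖ ≤ C δ ε` with `C` depending only on `δ`. -/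
theorem stmt16 (δ : ℕ) :
    ∃ C > (0 : ℝ), ∀ (H : Type) [NormedAddCommGroup H] [InnerProductSpace ℂ H]
      (V : Submodule ℂ H), IsClosed (V : Set H) →
      ∀ (φ : ℕ → H), (∀ ℓ, ℓ < δ → φ ℓ ∈ V) →
      ∀ (ε : ℝ), 0 < ε → ε < 1 / (4 * δ) →
      (∀ j ℓ, j < δ → ℓ < δ →
        ‖(inner ℂ (φ j) (φ ℓ) : ℂ) - (if j = ℓ then 1 else 0)‖ ≤ ε) →
      ∀ ℓ, ℓ < δ → ‖InnerProductSpace.gramSchmidtNormed ℂ φ ℓ - φ ℓ‖ ≤ C * δ * ε := by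
  refine ⟨3 * 5 ^ δ, by positivity, ?_⟩
  intro H _ _ V _ φ _ ε hε hεδ hG ℓ hℓ
  have hδ1 : (1:ℝ) ≤ (δ:ℝ) := by
    have : 1 ≤ δ := Nat.one_le_iff_ne_zero.mpr (by rintro rfl; exact Nat.not_lt_zero ℓ hℓ)
    exact_mod_cast this
  have hε1 : ε ≤ 1 := by
    have h4 : (0:ℝ) < 4 * δ := by linarith
    have : 1 / (4 * (δ:ℝ)) ≤ 1 := by
      rw [div_le_one h4]; linarith
    linarith
  have hkey := key δ φ ε hε hε1 hG ℓ hℓ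
  have h5 : (5:ℝ) ^ ℓ ≤ 5 ^ δ := by
    apply pow_le_pow_right₀ (by norm_num) (le_of_lt hℓ)
  have hKC : Kc ℓ ≤ 3 * 5 ^ δ * δ := by
    have h51 : (1:ℝ) ≤ 5 ^ δ := one_le_pow₀ (by norm_num)
    simp only [Kc]
    nlinarith [mul_nonneg (by linarith : (0:ℝ) ≤ (δ:ℝ) - 1) (by linarith : (0:ℝ) ≤ (5:ℝ) ^ δ)]
  calc ‖InnerProductSpace.gramSchmidtNormed ℂ φ ℓ - φ ℓ‖ ≤ Kc ℓ * ε := hkey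
    _ ≤ (3 * 5 ^ δ * δ) * ε := mul_le_mul_of_nonneg_right hKC hε.le
    _ = 3 * 5 ^ δ * δ * ε := by ring
end
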